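/- There hold the two integral identities 2 ∫_ℝ w₂'(x) w'(x) dx = −(2/(p−1) + 1/2) ∫_ℝ w'(x)² dx and σ^{−1} ∫_ℝ w₂(x) w(x) dx = (1/2 − 2/(p−1)) ∫_ℝ w'(x)² dx. -/

import Mathlib

set_option maxHeartbeats 1000000
open MeasureTheory Filter Set Topology


open Real

lemma my_integrable_exp_abs {b : ℝ} (hb : 0 < b) :
    Integrable (fun x : ℝ => Real.exp (-b * |x|)) := by
  have h0 : Integrable (fun x : ℝ => Real.exp (-|x|)) := by
    have h1 : IntegrableOn (fun x : ℝ => Real.exp (-|x|)) (Ioi 0) := by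
      refine (exp_neg_integrableOn_Ioi 0 one_pos).congr_fun ?_ measurableSet_Ioi
      intro x hx
      simp [abs_of_pos (mem_Ioi.mp hx)]
    have h2 : IntegrableOn (fun x : ℝ => Real.exp (-|x|)) (Iic 0) := by
      refine (integrableOn_exp_Iic 0).congr_fun ?_ measurableSet_Iic
      intro x hx
      simp [abs_of_nonpos (mem_Iic.mp hx)]
    rw [← integrableOn_univ, ← Set.Iic_union_Ioi (a := (0:ℝ))]
    exact h2.union h1
  have := (integrable_comp_mul_left_iff (fun x : ℝ => Real.exp (-|x|)) (ne_of_gt hb)).2 h0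
  refine this.congr ?_
  filter_upwards with x
  simp [abs_mul, abs_of_pos hb, mul_comm]

lemma my_integrable_of_bound {f : ℝ → ℝ} (hf : Continuous f) {C b : ℝ} (hb : 0 < b)
    (h : ∀ x, |f x| ≤ C * Real.exp (-b * |x|)) : Integrable f := by
  refine ((my_integrable_exp_abs hb).const_mul C).mono' hf.aestronglyMeasurable ?_
  filter_upwards with x
  simpa using h x

lemma my_tendsto_top {f : ℝ → ℝ} {C b : ℝ} (hb : 0 < b)
    (h : ∀ x, |f x| ≤ C * Real.exp (-b * |x|)) : Tendsto f atTop (𝓝 0) := by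
  apply squeeze_zero_norm (fun x => h x)
  have h1 : Tendsto (fun x : ℝ => -b * |x|) atTop atBot := by
    apply Tendsto.neg_mul_atTop (neg_lt_zero.2 hb) tendsto_const_nhds
      tendsto_abs_atTop_atTop
  have := (Real.tendsto_exp_atBot.comp h1).const_mul C
  simpa using this

lemma my_tendsto_bot {f : ℝ → ℝ} {C b : ℝ} (hb : 0 < b)
    (h : ∀ x, |f x| ≤ C * Real.exp (-b * |x|)) : Tendsto f atBot (𝓝 0) := by
  apply squeeze_zero_norm (fun x => h x)
  have h1 : Tendsto (fun x : ℝ => -b * |x|) atBot atBot := by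
    apply Tendsto.neg_mul_atTop (neg_lt_zero.2 hb) tendsto_const_nhds
      tendsto_abs_atBot_atTop
  have := (Real.tendsto_exp_atBot.comp h1).const_mul C
  simpa using this

lemma my_integral_deriv_zero (F F' : ℝ → ℝ) (hd : ∀ x, HasDerivAt F (F' x) x)
    (hi : Integrable F') (ht : Tendsto F atTop (𝓝 0)) (hb : Tendsto F atBot (𝓝 0)) :
    ∫ x, F' x = 0 := by
  have h1 : ∫ x in Ioi (0:ℝ), F' x = 0 - F 0 :=
    integral_Ioi_of_hasDerivAt_of_tendsto' (fun x _ => hd x) hi.integrableOn ht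
  have h2 : ∫ x in Iic (0:ℝ), F' x = F 0 - 0 :=
    integral_Iic_of_hasDerivAt_of_tendsto' (fun x _ => hd x) hi.integrableOn hb
  rw [← intervalIntegral.integral_Iic_add_Ioi (b := (0:ℝ)) hi.integrableOn hi.integrableOn, h1, h2]
  ring


/-- The two integral identities
`2 ∫ w₂' w' = −(2/(p−1) + 1/2) ∫ (w')²` and
`σ⁻¹ ∫ w₂ w = (1/2 − 2/(p−1)) ∫ (w')²`. -/
theorem integral_identities_for_w2
    (p : ℝ) (hp : 1 < p) (σ : ℝ) (hσ : σ = (p + 1) / (p - 1) - 1 / 2)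
    (w : ℝ → ℝ)
    (hw_pos : ∀ x, 0 < w x)
    (hw_smooth : ContDiff ℝ 2 w)
    (hw_eq : ∀ x, deriv (deriv w) x - w x + w x ^ p = 0)
    (hdecay : ∃ C₀ > (0:ℝ), ∃ a > (0:ℝ),
      ∀ x : ℝ, w x + |deriv w x| ≤ C₀ * Real.exp (-a * |x|))
    (w₂ : ℝ → ℝ)
    (hw₂ : w₂ = fun x => -(w x) / (p - 1) - (1 / 2) * x * deriv w x) :
    2 * (∫ x : ℝ, deriv w₂ x * deriv w x)
        = -(2 / (p - 1) + 1 / 2) * ∫ x : ℝ, (deriv w x) ^ 2 ∧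
    σ⁻¹ * (∫ x : ℝ, w₂ x * w x)
        = (1 / 2 - 2 / (p - 1)) * ∫ x : ℝ, (deriv w x) ^ 2 := by
  obtain ⟨C₀, hC₀, a, ha, hdec⟩ := hdecay
  have hp1 : p - 1 ≠ 0 := by linarith
  have hp2 : p + 1 ≠ 0 := by linarith
  have hp3 : p + 3 ≠ 0 := by linarith
  -- differentiability facts
  have hdiff : Differentiable ℝ w := hw_smooth.differentiable (by norm_num)
  have hd1 : ∀ x, HasDerivAt w (deriv w x) x := fun x => (hdiff x).hasDerivAt
  have hC1 : ContDiff ℝ 1 (deriv w) := by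
    have h2 : ContDiff ℝ (1 + 1) w := by exact_mod_cast hw_smooth
    exact (contDiff_succ_iff_deriv.mp h2).2.2
  have hdiff' : Differentiable ℝ (deriv w) := hC1.differentiable (by norm_num)
  have hd2 : ∀ x, HasDerivAt (deriv w) (deriv (deriv w) x) x :=
    fun x => (hdiff' x).hasDerivAt
  have hcw : Continuous w := hdiff.continuous
  have hcw' : Continuous (deriv w) := hdiff'.continuous
  have hcw'' : Continuous (deriv (deriv w)) := hC1.continuous_deriv le_rfl
  have hode : ∀ x, deriv (deriv w) x = w x - w x ^ p := fun x => by
    have := hw_eq x; linarith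
  -- basic bounds
  have hwb : ∀ x, w x ≤ C₀ * Real.exp (-a * |x|) := fun x => by
    have := hdec x; have := abs_nonneg (deriv w x); linarith
  have hw'b : ∀ x, |deriv w x| ≤ C₀ * Real.exp (-a * |x|) := fun x => by
    have := hdec x; have := (hw_pos x).le; linarith
  have hexp1 : ∀ x : ℝ, Real.exp (-a * |x|) ≤ 1 := fun x => by
    apply Real.exp_le_one_iff.mpr
    have := abs_nonneg x; nlinarith
  have hwC : ∀ x, w x ≤ C₀ := fun x => by
    have h1 := hwb x; have h2 := hexp1 x; nlinarith
  have hw'C : ∀ x, |deriv w x| ≤ C₀ := fun x => by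
    have h1 := hw'b x; have h2 := hexp1 x
    have h3 : 0 < Real.exp (-a * |x|) := Real.exp_pos _
    nlinarith
  have hwpC : ∀ x, w x ^ p ≤ C₀ ^ p := fun x =>
    Real.rpow_le_rpow (hw_pos x).le (hwC x) (by linarith)
  have hwpb : ∀ x, w x ^ p ≤ C₀ ^ (p - 1) * C₀ * Real.exp (-a * |x|) := fun x => by
    have h1 : w x ^ p = w x ^ (p - 1) * w x := by
      rw [show p = (p-1)+1 by ring]
      rw [Real.rpow_add (hw_pos x), Real.rpow_one]
      ring_nf
    have h2 : w x ^ (p - 1) ≤ C₀ ^ (p - 1) :=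
      Real.rpow_le_rpow (hw_pos x).le (hwC x) (by linarith)
    have h3 : (0:ℝ) ≤ w x ^ (p - 1) := (Real.rpow_pos_of_pos (hw_pos x) _).le
    have h4 := hwb x
    have h5 := (hw_pos x).le
    nlinarith
  have hw''b : ∀ x, |deriv (deriv w) x| ≤ (C₀ + C₀ ^ (p-1) * C₀) * Real.exp (-a * |x|) :=
    fun x => by
      rw [hode x]
      have h1 := hwb x
      have h2 := hwpb x
      have h3 := (hw_pos x).le
      have h4 : (0:ℝ) ≤ w x ^ p := (Real.rpow_pos_of_pos (hw_pos x) _).le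
      rw [abs_le]
      constructor <;> nlinarith
  have hxe : ∀ x : ℝ, |x| * Real.exp (-a * |x|) ≤ (2/a) * Real.exp (-(a/2) * |x|) := by
    intro x
    have h1 : (a/2) * |x| ≤ Real.exp ((a/2) * |x|) := by
      have := Real.add_one_le_exp ((a/2) * |x|); linarith
    have h2 : |x| ≤ (2/a) * Real.exp ((a/2) * |x|) := by
      have key : (2/a) * ((a/2) * |x|) = |x| := by field_simp
      have h4 := mul_le_mul_of_nonneg_left h1 (le_of_lt (show (0:ℝ) < 2/a by positivity))
      linarith [key ▸ h4]
    have h3 : Real.exp ((a/2) * |x|) * Real.exp (-a * |x|) = Real.exp (-(a/2) * |x|) := by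
      rw [← Real.exp_add]; ring_nf
    calc |x| * Real.exp (-a * |x|)
        ≤ ((2/a) * Real.exp ((a/2) * |x|)) * Real.exp (-a * |x|) :=
          mul_le_mul_of_nonneg_right h2 (Real.exp_pos _).le
      _ = (2/a) * (Real.exp ((a/2) * |x|) * Real.exp (-a * |x|)) := by ring
      _ = (2/a) * Real.exp (-(a/2) * |x|) := by rw [h3]
  -- integrability
  have iw2 : Integrable (fun x => (w x)^2) := by
    apply my_integrable_of_bound (hcw.pow 2) ha (C := C₀*C₀)
    intro x
    have h1 := hwb x; have h2 := hwC x; have h3 := (hw_pos x).le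
    simp only [Pi.pow_apply]
    rw [abs_of_nonneg (by positivity)]
    nlinarith
  have iw'2 : Integrable (fun x => (deriv w x)^2) := by
    apply my_integrable_of_bound (hcw'.pow 2) ha (C := C₀*C₀)
    intro x
    have h1 := hw'b x; have h2 := hw'C x
    have h3 := abs_nonneg (deriv w x)
    simp only [Pi.pow_apply]
    rw [abs_of_nonneg (by positivity)]
    nlinarith [sq_abs (deriv w x)]
  have iwp1 : Integrable (fun x => w x ^ (p+1)) := by
    apply my_integrable_of_bound (hcw.rpow_const (fun x => Or.inl (hw_pos x).ne')) ha
      (C := C₀^(p-1)*C₀*C₀)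
    intro x
    rw [abs_of_nonneg (Real.rpow_nonneg (hw_pos x).le _)]
    rw [Real.rpow_add (hw_pos x), Real.rpow_one]
    have h1 := hwpb x; have h2 := hwC x; have h3 := (hw_pos x).le
    have h4 : (0:ℝ) ≤ w x ^ p := (Real.rpow_pos_of_pos (hw_pos x) _).le
    have h5 : (0:ℝ) < Real.exp (-a * |x|) := Real.exp_pos _
    nlinarith
  have ixw'w'' : Integrable (fun x => x * (deriv w x * deriv (deriv w) x)) := by
    apply my_integrable_of_bound (continuous_id.mul (hcw'.mul hcw'')) (half_pos ha)
      (C := (2/a)*(C₀*(C₀ + C₀^(p-1)*C₀)))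
    intro x
    calc |x * (deriv w x * deriv (deriv w) x)|
        = |x| * (|deriv w x| * |deriv (deriv w) x|) := by rw [abs_mul, abs_mul]
      _ ≤ |x| * (C₀ * ((C₀ + C₀^(p-1)*C₀) * Real.exp (-a*|x|))) := by
          apply mul_le_mul_of_nonneg_left ?_ (abs_nonneg x)
          exact mul_le_mul (hw'C x) (hw''b x) (abs_nonneg _) hC₀.le
      _ = (|x| * Real.exp (-a*|x|)) * (C₀*(C₀ + C₀^(p-1)*C₀)) := by ring
      _ ≤ ((2/a) * Real.exp (-(a/2)*|x|)) * (C₀*(C₀+C₀^(p-1)*C₀)) := by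
          apply mul_le_mul_of_nonneg_right (hxe x)
          have h9 : (0:ℝ) ≤ C₀ ^ (p-1) := Real.rpow_nonneg hC₀.le _
          have h8 : (0:ℝ) ≤ C₀^(p-1)*C₀*C₀ := mul_nonneg (mul_nonneg h9 hC₀.le) hC₀.le
          nlinarith [mul_pos hC₀ hC₀]
      _ = ((2/a)*(C₀*(C₀+C₀^(p-1)*C₀))) * Real.exp (-(a/2)*|x|) := by ring
  have ixww' : Integrable (fun x => x * (w x * deriv w x)) := by
    apply my_integrable_of_bound (continuous_id.mul (hcw.mul hcw')) (half_pos ha) (C := (2/a)*(C₀*C₀))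
    intro x
    calc |x * (w x * deriv w x)|
        = |x| * (|w x| * |deriv w x|) := by rw [abs_mul, abs_mul]
      _ ≤ |x| * ((C₀ * Real.exp (-a*|x|)) * C₀) := by
          apply mul_le_mul_of_nonneg_left ?_ (abs_nonneg x)
          refine mul_le_mul ?_ (hw'C x) (abs_nonneg _)
            (mul_nonneg hC₀.le (Real.exp_pos _).le)
          rw [abs_of_pos (hw_pos x)]; exact hwb x
      _ = (|x| * Real.exp (-a*|x|)) * (C₀*C₀) := by ring
      _ ≤ ((2/a) * Real.exp (-(a/2)*|x|)) * (C₀*C₀) := by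
          apply mul_le_mul_of_nonneg_right (hxe x) (mul_pos hC₀ hC₀).le
      _ = ((2/a)*(C₀*C₀)) * Real.exp (-(a/2)*|x|) := by ring
  -- zero integrals from total derivatives
  have Z1 : ∫ x, ((1/2) * (deriv w x)^2 + x * (deriv w x * deriv (deriv w) x)) = 0 := by
    apply my_integral_deriv_zero (fun y => (1/2)*y*(deriv w y * deriv w y))
    · intro x
      have h := (((hasDerivAt_id' x).const_mul (1/2:ℝ)).mul ((hd2 x).mul (hd2 x)))
      refine h.congr_deriv ?_
      simp only [Pi.mul_apply]
      ring
    · exact (iw'2.const_mul _).add ixw'w''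
    all_goals {
      have hbF : ∀ x : ℝ, |(1/2)*x*(deriv w x * deriv w x)|
          ≤ ((1/2)*((2/a)*(C₀*C₀))) * Real.exp (-(a/2)*|x|) := by
        intro x
        calc |(1/2)*x*(deriv w x * deriv w x)|
            = (1/2) * (|x| * (|deriv w x| * |deriv w x|)) := by
              rw [abs_mul, abs_mul, abs_mul]; simp [abs_of_nonneg]; ring
          _ ≤ (1/2) * (|x| * ((C₀ * Real.exp (-a*|x|)) * C₀)) := by
              apply mul_le_mul_of_nonneg_left ?_ (by norm_num)
              apply mul_le_mul_of_nonneg_left ?_ (abs_nonneg x)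
              exact mul_le_mul (hw'b x) (hw'C x) (abs_nonneg _) (mul_nonneg hC₀.le (Real.exp_pos _).le)
          _ = (1/2) * ((|x| * Real.exp (-a*|x|)) * (C₀*C₀)) := by ring
          _ ≤ (1/2) * (((2/a) * Real.exp (-(a/2)*|x|)) * (C₀*C₀)) := by
              apply mul_le_mul_of_nonneg_left ?_ (by norm_num)
              apply mul_le_mul_of_nonneg_right (hxe x) (mul_pos hC₀ hC₀).le
          _ = ((1/2)*((2/a)*(C₀*C₀))) * Real.exp (-(a/2)*|x|) := by ring
      first
        | exact my_tendsto_top (half_pos ha) hbF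
        | exact my_tendsto_bot (half_pos ha) hbF }
  have Z2 : ∫ x, ((1/2) * (w x)^2 + x * (w x * deriv w x)) = 0 := by
    apply my_integral_deriv_zero (fun y => (1/2)*y*(w y * w y))
    · intro x
      have h := (((hasDerivAt_id' x).const_mul (1/2:ℝ)).mul ((hd1 x).mul (hd1 x)))
      refine h.congr_deriv ?_
      simp only [Pi.mul_apply]
      ring
    · exact (iw2.const_mul _).add ixww'
    all_goals {
      have hbF : ∀ x : ℝ, |(1/2)*x*(w x * w x)|
          ≤ ((1/2)*((2/a)*(C₀*C₀))) * Real.exp (-(a/2)*|x|) := by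
        intro x
        have hwa : |w x| = w x := abs_of_pos (hw_pos x)
        calc |(1/2)*x*(w x * w x)|
            = (1/2) * (|x| * (|w x| * |w x|)) := by
              rw [abs_mul, abs_mul, abs_mul]; simp [abs_of_nonneg]; ring
          _ ≤ (1/2) * (|x| * ((C₀ * Real.exp (-a*|x|)) * C₀)) := by
              apply mul_le_mul_of_nonneg_left ?_ (by norm_num)
              apply mul_le_mul_of_nonneg_left ?_ (abs_nonneg x)
              rw [hwa]
              exact mul_le_mul (hwb x) (hwC x) (hw_pos x).le (mul_nonneg hC₀.le (Real.exp_pos _).le)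
          _ = (1/2) * ((|x| * Real.exp (-a*|x|)) * (C₀*C₀)) := by ring
          _ ≤ (1/2) * (((2/a) * Real.exp (-(a/2)*|x|)) * (C₀*C₀)) := by
              apply mul_le_mul_of_nonneg_left ?_ (by norm_num)
              apply mul_le_mul_of_nonneg_right (hxe x) (mul_pos hC₀ hC₀).le
          _ = ((1/2)*((2/a)*(C₀*C₀))) * Real.exp (-(a/2)*|x|) := by ring
      first
        | exact my_tendsto_top (half_pos ha) hbF
        | exact my_tendsto_bot (half_pos ha) hbF }
  have iww'' : Integrable (fun x => w x * deriv (deriv w) x) := by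
    apply my_integrable_of_bound (hcw.mul hcw'') ha (C := C₀*(C₀ + C₀^(p-1)*C₀))
    intro x
    calc |w x * deriv (deriv w) x| = |w x| * |deriv (deriv w) x| := abs_mul _ _
      _ ≤ C₀ * ((C₀ + C₀^(p-1)*C₀) * Real.exp (-a*|x|)) := by
          refine mul_le_mul ?_ (hw''b x) (abs_nonneg _) hC₀.le
          rw [abs_of_pos (hw_pos x)]; exact hwC x
      _ = (C₀*(C₀ + C₀^(p-1)*C₀)) * Real.exp (-a*|x|) := by ring
  have Z3 : ∫ x, ((deriv w x)^2 + w x * deriv (deriv w) x) = 0 := by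
    apply my_integral_deriv_zero (fun y => w y * deriv w y)
    · intro x
      have h := (hd1 x).mul (hd2 x)
      refine h.congr_deriv ?_
      ring
    · exact iw'2.add iww''
    all_goals {
      have hbF : ∀ x : ℝ, |w x * deriv w x| ≤ (C₀*C₀) * Real.exp (-a*|x|) := by
        intro x
        calc |w x * deriv w x| = |w x| * |deriv w x| := abs_mul _ _
          _ ≤ (C₀ * Real.exp (-a*|x|)) * C₀ := by
              refine mul_le_mul ?_ (hw'C x) (abs_nonneg _)
                (mul_nonneg hC₀.le (Real.exp_pos _).le)
              rw [abs_of_pos (hw_pos x)]; exact hwb x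
          _ = (C₀*C₀) * Real.exp (-a*|x|) := by ring
      first
        | exact my_tendsto_top ha hbF
        | exact my_tendsto_bot ha hbF }
  -- conserved energy
  set E : ℝ → ℝ := fun x => (1/2)*(deriv w x)^2 - (1/2)*(w x)^2 + (w x)^(p+1)/(p+1) with hE
  have hEd : ∀ x, HasDerivAt E 0 x := by
    intro x
    have h1 := ((hd2 x).pow 2).const_mul (1/2:ℝ)
    have h2 := ((hd1 x).pow 2).const_mul (1/2:ℝ)
    have h3 : HasDerivAt (fun y => (w y)^(p+1)) ((deriv w x) * (p+1) * (w x)^((p+1)-1)) x :=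
      (hd1 x).rpow_const (Or.inl (hw_pos x).ne')
    have h4 := (h1.sub h2).add (h3.div_const (p+1))
    refine h4.congr_deriv ?_
    rw [hode x]
    have e1 : p + 1 - 1 = p := by ring
    rw [e1]
    push_cast
    field_simp
    ring
  have hEc : ∀ x y, E x = E y := fun x y =>
    is_const_of_deriv_eq_zero (fun z => (hEd z).differentiableAt) (fun z => (hEd z).deriv) x y
  have hEb : ∀ x, |E x| ≤ (C₀*C₀ + C₀^(p-1)*C₀*C₀) * Real.exp (-a*|x|) := by
    intro x
    have h1 : (deriv w x)^2 ≤ (C₀*Real.exp (-a*|x|))*C₀ := by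
      nlinarith [sq_abs (deriv w x), hw'b x, hw'C x, abs_nonneg (deriv w x)]
    have h2 : (w x)^2 ≤ (C₀*Real.exp (-a*|x|))*C₀ := by
      nlinarith [hwb x, hwC x, (hw_pos x).le]
    have h3 : (w x)^(p+1) ≤ (C₀^(p-1)*C₀*Real.exp (-a*|x|))*C₀ := by
      rw [Real.rpow_add (hw_pos x), Real.rpow_one]
      nlinarith [hwpb x, hwC x, (hw_pos x).le, (Real.rpow_pos_of_pos (hw_pos x) p).le]
    have h4 : (0:ℝ) ≤ (w x)^(p+1) := Real.rpow_nonneg (hw_pos x).le _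
    have h5 : (0:ℝ) ≤ (w x)^2 := sq_nonneg _
    have h6 : (0:ℝ) ≤ (deriv w x)^2 := sq_nonneg _
    have h7 : (0:ℝ) < p + 1 := by linarith
    have h8 : (w x)^(p+1)/(p+1) ≤ (w x)^(p+1) := by
      apply div_le_self h4 (by linarith)
    have h9 : (0:ℝ) ≤ (w x)^(p+1)/(p+1) := div_nonneg h4 h7.le
    rw [hE, abs_le]
    constructor <;> simp only [] <;> nlinarith
  have hEt : Tendsto E atTop (𝓝 0) := my_tendsto_top ha hEb
  have hE0 : ∀ x, E x = 0 := by
    intro x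
    have hconst : Tendsto E atTop (𝓝 (E x)) := by
      have heq : E = fun _ => E x := funext (fun y => hEc y x)
      rw [heq]; exact tendsto_const_nhds
    exact tendsto_nhds_unique hconst hEt
  have hpt : ∀ x, (deriv w x)^2 = (w x)^2 - (2/(p+1)) * (w x)^(p+1) := by
    intro x
    have h := hE0 x
    rw [hE] at h
    simp only [] at h
    field_simp at h ⊢
    linarith
  set I := ∫ x : ℝ, (deriv w x)^2 with hIdef
  set J := ∫ x : ℝ, (w x)^2 with hJdef
  set K := ∫ x : ℝ, w x ^ (p+1) with hKdef
  have hIJK : I = J - (2/(p+1)) * K := by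
    rw [hIdef]
    calc ∫ x : ℝ, (deriv w x)^2
        = ∫ x : ℝ, ((w x)^2 - (2/(p+1)) * (w x)^(p+1)) :=
          integral_congr_ae (Filter.Eventually.of_forall hpt)
      _ = J - (2/(p+1))*K := by
          rw [integral_sub iw2 (iwp1.const_mul _), integral_const_mul]
  have hww''pt : ∀ x, (deriv w x)^2 + w x * deriv (deriv w) x
      = (deriv w x)^2 + ((w x)^2 - w x ^ (p+1)) := by
    intro x
    rw [hode x, Real.rpow_add (hw_pos x), Real.rpow_one]
    ring
  have hK : K = I + J := by
    have h2 : ∫ x : ℝ, ((deriv w x)^2 + w x * deriv (deriv w) x) = I + (J - K) := by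
      calc ∫ x : ℝ, ((deriv w x)^2 + w x * deriv (deriv w) x)
          = ∫ x : ℝ, ((deriv w x)^2 + ((w x)^2 - w x ^ (p+1))) :=
            integral_congr_ae (Filter.Eventually.of_forall hww''pt)
        _ = (∫ x : ℝ, (deriv w x)^2) + ∫ x : ℝ, ((w x)^2 - w x ^ (p+1)) :=
            integral_add iw'2 (iw2.sub iwp1)
        _ = I + (J - K) := by
            rw [hIdef, integral_sub iw2 iwp1]
    have h := Z3
    rw [h2] at h
    linarith
  have hJI : (p - 1) * J = (p + 3) * I := by
    have h := hIJK
    rw [hK] at h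
    field_simp at h
    linarith
  have hA : ∫ x : ℝ, x * (deriv w x * deriv (deriv w) x) = -(1/2) * I := by
    have h := Z1
    rw [integral_add (iw'2.const_mul _) ixw'w'', integral_const_mul] at h
    linarith
  have hB : ∫ x : ℝ, x * (w x * deriv w x) = -(1/2) * J := by
    have h := Z2
    rw [integral_add (iw2.const_mul _) ixww', integral_const_mul] at h
    linarith
  constructor
  · have hw₂d : ∀ x, deriv w₂ x
        = -(deriv w x)/(p-1) - (1/2*1*deriv w x + (1/2*x)*deriv (deriv w) x) := by
      intro x
      have h1 : HasDerivAt (fun y => -(w y)/(p-1)) (-(deriv w x)/(p-1)) x :=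
        ((hd1 x).neg).div_const _
      have h2 : HasDerivAt (fun y : ℝ => 1/2*y*deriv w y)
          ((1/2*1)*deriv w x + (1/2*x)*deriv (deriv w) x) x :=
        ((hasDerivAt_id' x).const_mul (1/2:ℝ)).mul (hd2 x)
      have h3 := h1.sub h2
      rw [hw₂]
      exact h3.deriv
    have hint : ∀ x, deriv w₂ x * deriv w x
        = (-(1/(p-1)) - 1/2)*(deriv w x)^2
          + (-(1/2))*(x*(deriv w x * deriv (deriv w) x)) := by
      intro x; rw [hw₂d x]; ring
    rw [show (∫ x : ℝ, deriv w₂ x * deriv w x)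
        = ∫ x : ℝ, ((-(1/(p-1)) - 1/2)*(deriv w x)^2
          + (-(1/2))*(x*(deriv w x * deriv (deriv w) x)))
      from integral_congr_ae (Filter.Eventually.of_forall hint)]
    rw [integral_add (iw'2.const_mul _) (ixw'w''.const_mul _),
      integral_const_mul, integral_const_mul, hA]
    field_simp
    ring
  · have hint2 : ∀ x, w₂ x * w x
        = (-(1/(p-1)))*(w x)^2 + (-(1/2))*(x*(w x * deriv w x)) := by
      intro x; simp only [hw₂]; ring
    rw [show (∫ x : ℝ, w₂ x * w x)
        = ∫ x : ℝ, ((-(1/(p-1)))*(w x)^2 + (-(1/2))*(x*(w x * deriv w x)))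
      from integral_congr_ae (Filter.Eventually.of_forall hint2)]
    rw [integral_add (iw2.const_mul _) (ixww'.const_mul _),
      integral_const_mul, integral_const_mul, hB]
    rw [← hJdef]
    have hJval : J = ((p+3)*I)/(p-1) := by
      rw [eq_div_iff hp1]; linarith
    have hσval : σ = (p+3)/(2*(p-1)) := by
      rw [hσ]; field_simp; ring
    rw [hJval, hσval]
    have hne : (p+3)/(2*(p-1)) ≠ 0 := by
      apply div_ne_zero hp3
      intro h; apply hp1; linarith
    field_simp
    ring
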